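/- Let (E, ‖·‖) be a two-dimensional real normed space and let ω be a nonzero alternating bilinear form on E. Define the antinorm by ‖x‖ₐ := sup{|ω(y, x)| : y ∈ E, ‖y‖ = 1}. Then Birkhoff orthogonality is a symmetric relation on E (i.e., for all x, y ∈ E, x ⊣_B y implies y ⊣_B x) if and only if there exists λ > 0 such that ‖x‖ = λ·‖x‖ₐ for all x ∈ E. -/

import Mathlib

/-- Birkhoff orthogonality: `x ⊣_B y` iff `‖x‖ ≤ ‖x + t • y‖` for every `t`. -/
def BirkhoffOrth {E : Type*} [NormedAddCommGroup E] [NormedSpace ℝ E]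
    (x y : E) : Prop := ∀ t : ℝ, ‖x‖ ≤ ‖x + t • y‖

/-- The antinorm associated to a determinant form `ω`. -/
noncomputable def antinorm {E : Type*} [NormedAddCommGroup E] [NormedSpace ℝ E]
    (ω : E →ₗ[ℝ] E →ₗ[ℝ] ℝ) (x : E) : ℝ :=
  sSup ((fun y => |ω y x|) '' Metric.sphere (0 : E) 1)

set_option linter.unusedSectionVars false
set_option linter.unusedVariables false
set_option maxHeartbeats 1000000
open Module

structure Pack (E : Type*) [NormedAddCommGroup E] [NormedSpace ℝ E]
    (ω : E →ₗ[ℝ] E →ₗ[ℝ] ℝ) where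
  e₁ : E
  e₂ : E
  c₁ : E →L[ℝ] ℝ
  c₂ : E →L[ℝ] ℝ
  hc : ∀ x : E, x = c₁ x • e₁ + c₂ x • e₂
  hωc : ∀ x y : E, ω x y = c₁ x * c₂ y - c₂ x * c₁ y
  hc₁e₁ : c₁ e₁ = 1
  hc₂e₁ : c₂ e₁ = 0
  hc₁e₂ : c₁ e₂ = 0
  hc₂e₂ : c₂ e₂ = 1

theorem sphere_ne' (E : Type*) [NormedAddCommGroup E] [NormedSpace ℝ E] [Nontrivial E] :
    (Metric.sphere (0:E) 1).Nonempty :=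
  NormedSpace.sphere_nonempty.mpr zero_le_one

namespace Pack

variable {E : Type*} [NormedAddCommGroup E] [NormedSpace ℝ E]
    {ω : E →ₗ[ℝ] E →ₗ[ℝ] ℝ}

/-- master bilinear bound constant -/
noncomputable def K (P : Pack E ω) : ℝ := ‖P.c₁‖ * ‖P.c₂‖ + ‖P.c₂‖ * ‖P.c₁‖

theorem K_nonneg (P : Pack E ω) : 0 ≤ P.K := by
  have := norm_nonneg P.c₁; have := norm_nonneg P.c₂
  unfold K; positivity

theorem omega_bound (P : Pack E ω) (x y : E) : |ω x y| ≤ P.K * (‖x‖ * ‖y‖) := by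
  rw [P.hωc]
  have h1 : |P.c₁ x * P.c₂ y| ≤ (‖P.c₁‖ * ‖P.c₂‖) * (‖x‖ * ‖y‖) := by
    rw [abs_mul]
    calc |P.c₁ x| * |P.c₂ y| ≤ (‖P.c₁‖ * ‖x‖) * (‖P.c₂‖ * ‖y‖) := by
          apply mul_le_mul (P.c₁.le_opNorm x) (P.c₂.le_opNorm y) (abs_nonneg _) (by positivity)
      _ = (‖P.c₁‖ * ‖P.c₂‖) * (‖x‖ * ‖y‖) := by ring
  have h2 : |P.c₂ x * P.c₁ y| ≤ (‖P.c₂‖ * ‖P.c₁‖) * (‖x‖ * ‖y‖) := by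
    rw [abs_mul]
    calc |P.c₂ x| * |P.c₁ y| ≤ (‖P.c₂‖ * ‖x‖) * (‖P.c₁‖ * ‖y‖) := by
          apply mul_le_mul (P.c₂.le_opNorm x) (P.c₁.le_opNorm y) (abs_nonneg _) (by positivity)
      _ = (‖P.c₂‖ * ‖P.c₁‖) * (‖x‖ * ‖y‖) := by ring
  calc |P.c₁ x * P.c₂ y - P.c₂ x * P.c₁ y| ≤ |P.c₁ x * P.c₂ y| + |P.c₂ x * P.c₁ y| :=
        abs_sub _ _
    _ ≤ (‖P.c₁‖ * ‖P.c₂‖) * (‖x‖ * ‖y‖) + (‖P.c₂‖ * ‖P.c₁‖) * (‖x‖ * ‖y‖) := by linarith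
    _ = P.K * (‖x‖ * ‖y‖) := by rw [K]; ring

theorem anti (P : Pack E ω) (x y : E) : ω x y = - ω y x := by rw [P.hωc, P.hωc]; ring

theorem coords_zero (P : Pack E ω) {x : E} (h1 : P.c₁ x = 0) (h2 : P.c₂ x = 0) : x = 0 := by
  have := P.hc x; rw [h1, h2] at this; simpa using this

theorem omega_e₂ (P : Pack E ω) (x : E) : ω x P.e₂ = P.c₁ x := by
  rw [P.hωc, P.hc₁e₂, P.hc₂e₂]; ring

theorem omega_e₁ (P : Pack E ω) (x : E) : ω x P.e₁ = - P.c₂ x := by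
  rw [P.hωc, P.hc₁e₁, P.hc₂e₁]; ring

variable [FiniteDimensional ℝ E] [Nontrivial E]

theorem bddAbove_img (P : Pack E ω) (x : E) :
    BddAbove ((fun y => |ω y x|) '' Metric.sphere (0 : E) 1) := by
  refine ⟨P.K * ‖x‖, ?_⟩
  rintro r ⟨y, hy, rfl⟩
  rw [mem_sphere_zero_iff_norm] at hy
  calc |ω y x| ≤ P.K * (‖y‖ * ‖x‖) := P.omega_bound y x
    _ = P.K * ‖x‖ := by rw [hy, one_mul]

theorem le_antinorm (P : Pack E ω) {z : E} (hz : ‖z‖ = 1) (x : E) : |ω z x| ≤ antinorm ω x :=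
  le_csSup (P.bddAbove_img x) ⟨z, mem_sphere_zero_iff_norm.mpr hz, rfl⟩

theorem antinorm_le (P : Pack E ω) (x : E) : antinorm ω x ≤ P.K * ‖x‖ := by
  apply csSup_le (Set.Nonempty.image _ (sphere_ne' E))
  rintro r ⟨y, hy, rfl⟩
  rw [mem_sphere_zero_iff_norm] at hy
  calc |ω y x| ≤ P.K * (‖y‖ * ‖x‖) := P.omega_bound y x
    _ = P.K * ‖x‖ := by rw [hy, one_mul]

theorem antinorm_nonneg (P : Pack E ω) (x : E) : 0 ≤ antinorm ω x := by
  obtain ⟨z, hz⟩ := sphere_ne' E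
  exact le_trans (abs_nonneg _) (P.le_antinorm (mem_sphere_zero_iff_norm.mp hz) x)

/-- The fundamental inequality. -/
theorem L1 (P : Pack E ω) (x y : E) : |ω x y| ≤ ‖x‖ * antinorm ω y := by
  rcases eq_or_ne x 0 with rfl | hx
  · simp
  · have hxn : ‖x‖ ≠ 0 := norm_ne_zero_iff.mpr hx
    have h := P.le_antinorm (z := ‖x‖⁻¹ • x) (by
      rw [norm_smul, norm_inv, norm_norm, inv_mul_cancel₀ hxn]) y
    rw [map_smul, LinearMap.smul_apply, smul_eq_mul, abs_mul, abs_inv, abs_norm] at h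
    calc |ω x y| = ‖x‖ * (‖x‖⁻¹ * |ω x y|) := by field_simp
      _ ≤ ‖x‖ * antinorm ω y := by
          apply mul_le_mul_of_nonneg_left h (norm_nonneg x)

theorem attained (P : Pack E ω) (x : E) : ∃ z : E, ‖z‖ = 1 ∧ |ω z x| = antinorm ω x := by
  have hcont : ContinuousOn (fun y => |ω y x|) (Metric.sphere (0:E) 1) := by
    apply Continuous.continuousOn
    have : (fun y : E => |ω y x|) = fun y => |P.c₁ y * P.c₂ x - P.c₂ y * P.c₁ x| := by
      funext y; rw [P.hωc]
    rw [this]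
    exact ((((P.c₁.continuous).mul continuous_const).sub
      ((P.c₂.continuous).mul continuous_const)).abs)
  obtain ⟨z, hz, hmax⟩ := (isCompact_sphere (0:E) 1).exists_isMaxOn (sphere_ne' E) hcont
  refine ⟨z, mem_sphere_zero_iff_norm.mp hz,
    le_antisymm (P.le_antinorm (mem_sphere_zero_iff_norm.mp hz) x) ?_⟩
  apply csSup_le (Set.Nonempty.image _ (sphere_ne' E))
  rintro r ⟨y, hy, rfl⟩
  exact hmax hy

theorem antinorm_pos (P : Pack E ω) {x : E} (hx : x ≠ 0) : 0 < antinorm ω x := by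
  rcases (P.antinorm_nonneg x).lt_or_eq with h | h
  · exact h
  · exfalso
    apply hx
    have hz : ∀ z : E, ‖z‖ = 1 → ω z x = 0 := by
      intro z hzn
      have := P.le_antinorm hzn x
      rw [← h] at this
      exact abs_eq_zero.mp (le_antisymm this (abs_nonneg _))
    have hall : ∀ z : E, z ≠ 0 → ω z x = 0 := by
      intro z hz0
      have hzn : ‖z‖ ≠ 0 := norm_ne_zero_iff.mpr hz0
      have := hz (‖z‖⁻¹ • z) (by rw [norm_smul, norm_inv, norm_norm, inv_mul_cancel₀ hzn])
      rw [map_smul, LinearMap.smul_apply, smul_eq_mul] at this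
      have h2 : ‖z‖⁻¹ ≠ 0 := inv_ne_zero hzn
      rcases mul_eq_zero.mp this with h3 | h3
      · exact absurd h3 h2
      · exact h3
    have he₁ : P.e₁ ≠ 0 := by
      intro h0; have := P.hc₁e₁; rw [h0] at this; simp at this
    have he₂ : P.e₂ ≠ 0 := by
      intro h0; have := P.hc₂e₂; rw [h0] at this; simp at this
    have h1 := hall P.e₂ he₂
    have h2 := hall P.e₁ he₁
    rw [P.hωc, P.hc₁e₂, P.hc₂e₂] at h1
    rw [P.hωc, P.hc₁e₁, P.hc₂e₁] at h2
    apply P.coords_zero <;> linarith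

theorem antinorm_smul (P : Pack E ω) (t : ℝ) (x : E) :
    antinorm ω (t • x) = |t| * antinorm ω x := by
  apply le_antisymm
  · apply csSup_le (Set.Nonempty.image _ (sphere_ne' E))
    rintro r ⟨y, hy, rfl⟩
    rw [mem_sphere_zero_iff_norm] at hy
    show |ω y (t • x)| ≤ |t| * antinorm ω x
    rw [map_smul, smul_eq_mul, abs_mul]
    exact mul_le_mul_of_nonneg_left (P.le_antinorm hy x) (abs_nonneg t)
  · obtain ⟨z, hz, hval⟩ := P.attained x
    calc |t| * antinorm ω x = |t| * |ω z x| := by rw [hval]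
      _ = |ω z (t • x)| := by rw [map_smul, smul_eq_mul, abs_mul]
      _ ≤ antinorm ω (t • x) := P.le_antinorm hz _

theorem antinorm_lip (P : Pack E ω) (u w : E) :
    |antinorm ω u - antinorm ω w| ≤ P.K * ‖u - w‖ := by
  have key : ∀ a b : E, antinorm ω a ≤ antinorm ω b + P.K * ‖a - b‖ := by
    intro a b
    apply csSup_le (Set.Nonempty.image _ (sphere_ne' E))
    rintro r ⟨y, hy, rfl⟩
    rw [mem_sphere_zero_iff_norm] at hy
    show |ω y a| ≤ _
    have h1 : |ω y a| ≤ |ω y b| + |ω y (a - b)| := by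
      have : ω y a = ω y b + ω y (a - b) := by rw [map_sub]; ring
      rw [this]; exact abs_add_le _ _
    have h2 : |ω y (a-b)| ≤ P.K * ‖a - b‖ := by
      calc |ω y (a-b)| ≤ P.K * (‖y‖ * ‖a-b‖) := P.omega_bound _ _
        _ = P.K * ‖a-b‖ := by rw [hy, one_mul]
    have h3 := P.le_antinorm hy b
    linarith
  rw [abs_sub_le_iff]
  constructor
  · have := key u w; linarith
  · have := key w u
    rw [norm_sub_rev] at this
    linarith

theorem self0 (P : Pack E ω) (x : E) : ω x x = 0 := by rw [P.hωc]; ring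

/-- dependence from vanishing of ω -/
theorem dep_of_omega_zero (P : Pack E ω) {x y : E} (h : ω x y = 0) (hx : x ≠ 0) :
    ∃ s : ℝ, y = s • x := by
  rw [P.hωc] at h
  rcases eq_or_ne (P.c₁ x) 0 with h1 | h1
  · have h2 : P.c₂ x ≠ 0 := by
      intro h2; exact hx (P.coords_zero h1 h2)
    refine ⟨P.c₂ y / P.c₂ x, ?_⟩
    have hc1 : P.c₁ y = 0 := by
      rw [h1] at h; simp at h
      rcases h with h | h
      · exact absurd h h2
      · exact h
    apply sub_eq_zero.mp
    apply P.coords_zero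
    · simp [hc1, h1]
    · simp; field_simp; ring
  · refine ⟨P.c₁ y / P.c₁ x, ?_⟩
    apply sub_eq_zero.mp
    apply P.coords_zero
    · simp; field_simp; ring
    · simp; field_simp; linarith [h]

/-- span: if ω x y ≠ 0 then (x,y) spans E -/
theorem span_pair (P : Pack E ω) {x y : E} (h : ω x y ≠ 0) (z : E) :
    ∃ a b : ℝ, z = a • x + b • y := by
  set D := ω x y with hD
  refine ⟨(P.c₁ z * P.c₂ y - P.c₂ z * P.c₁ y) / D, (P.c₁ x * P.c₂ z - P.c₂ x * P.c₁ z) / D, ?_⟩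
  have hDef : D = P.c₁ x * P.c₂ y - P.c₂ x * P.c₁ y := P.hωc x y
  apply sub_eq_zero.mp
  apply P.coords_zero <;>
  · simp only [map_sub, map_add, map_smul, smul_eq_mul]
    field_simp
    rw [hDef]
    ring

end Pack

namespace Pack
variable {E : Type*} [NormedAddCommGroup E] [NormedSpace ℝ E]
    {ω : E →ₗ[ℝ] E →ₗ[ℝ] ℝ} [FiniteDimensional ℝ E] [Nontrivial E]

theorem antinorm_zero (P : Pack E ω) : antinorm ω (0 : E) = 0 := by
  have := P.antinorm_smul 0 (0:E)
  simpa using this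

theorem birkhoff_zero_left (y : E) : BirkhoffOrth (0 : E) y := by
  intro t; simp

/-- x Birkhoff-orthogonal to a nonzero multiple of itself is impossible for x ≠ 0 -/
theorem not_birkhoff_self (P : Pack E ω) {x : E} (hx : x ≠ 0) {s : ℝ} (hs : s ≠ 0) :
    ¬ BirkhoffOrth x (s • x) := by
  intro h
  have := h (-(1/s))
  rw [smul_smul] at this
  have hss : -(1/s) * s = -1 := by field_simp
  rw [hss] at this
  simp at this
  exact absurd this hx

/-- The key characterization of Birkhoff orthogonality via the form and antinorm. -/
theorem birkhoff_iff (P : Pack E ω) (x y : E) :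
    BirkhoffOrth x y ↔ |ω x y| = ‖x‖ * antinorm ω y := by
  constructor
  · intro h
    rcases eq_or_ne x 0 with rfl | hx
    · simp
    rcases eq_or_ne y 0 with rfl | hy
    · simp [P.antinorm_zero]
    have hωxy : ω x y ≠ 0 := by
      intro h0
      obtain ⟨s, rfl⟩ := P.dep_of_omega_zero h0 hx
      have hs : s ≠ 0 := by
        intro h1; rw [h1] at hy; simp at hy
      exact P.not_birkhoff_self hx hs h
    obtain ⟨z, hz, hval⟩ := P.attained y
    obtain ⟨a, b, hab⟩ := P.span_pair hωxy z
    have hωzy : ω z y = a * ω x y := by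
      rw [hab]
      simp only [map_add, map_smul, LinearMap.add_apply, LinearMap.smul_apply, smul_eq_mul]
      rw [P.self0 y]; ring
    have ha : a ≠ 0 := by
      intro h0
      rw [h0, zero_mul] at hωzy
      rw [hωzy] at hval
      simp at hval
      exact absurd (hval.symm) (ne_of_gt (P.antinorm_pos hy))
    have hnorm : |a| * ‖x + (a⁻¹ * b) • y‖ = 1 := by
      symm
      have h1 : a • (x + (a⁻¹ * b) • y) = a • x + b • y := by
        rw [smul_add, smul_smul]
        congr 2
        field_simp
      have h2 : ‖a • x + b • y‖ = 1 := by rw [← hab, hz]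
      rw [← h2, ← h1, norm_smul]
      simp [Real.norm_eq_abs]
    have hx0 : (0:ℝ) < ‖x‖ := norm_pos_iff.mpr hx
    have hxa : |a| * ‖x‖ ≤ 1 := by
      calc |a| * ‖x‖ ≤ |a| * ‖x + (a⁻¹ * b) • y‖ :=
            mul_le_mul_of_nonneg_left (h (a⁻¹ * b)) (abs_nonneg a)
        _ = 1 := hnorm
    -- antinorm ω y = |a| * |ω x y| ≤ |ω x y| / ‖x‖
    have hA : antinorm ω y = |a| * |ω x y| := by rw [← hval, hωzy, abs_mul]
    have hle : ‖x‖ * antinorm ω y ≤ |ω x y| := by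
      rw [hA]
      calc ‖x‖ * (|a| * |ω x y|) = (|a| * ‖x‖) * |ω x y| := by ring
        _ ≤ 1 * |ω x y| := mul_le_mul_of_nonneg_right hxa (abs_nonneg _)
        _ = |ω x y| := one_mul _
    exact le_antisymm (P.L1 x y) hle
  · intro h t
    rcases eq_or_ne y 0 with rfl | hy
    · simp
    have hA : 0 < antinorm ω y := P.antinorm_pos hy
    have h1 : ω (x + t • y) y = ω x y := by
      simp only [map_add, map_smul, LinearMap.add_apply, LinearMap.smul_apply, smul_eq_mul]
      rw [P.self0 y]; ring
    have h2 : |ω x y| ≤ ‖x + t • y‖ * antinorm ω y := by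
      rw [← h1]; exact P.L1 _ y
    rw [h] at h2
    exact le_of_mul_le_mul_right h2 hA

end Pack

/-- angle reduction: a real with positive sine is `2πk`-close to `(0,π)`. -/
theorem ang_reduce {τ : ℝ} (h : 0 < Real.sin τ) :
    ∃ k : ℤ, 0 < τ - k * (2*Real.pi) ∧ τ - k * (2*Real.pi) < Real.pi := by
  have hπ : (0:ℝ) < 2*Real.pi := by positivity
  set k := ⌊τ / (2*Real.pi)⌋ with hk
  have h2 : (k:ℝ) * (2*Real.pi) ≤ τ := by
    have := Int.floor_le (τ / (2*Real.pi))
    calc (k:ℝ) * (2*Real.pi) ≤ (τ/(2*Real.pi)) * (2*Real.pi) := by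
          apply mul_le_mul_of_nonneg_right this (le_of_lt hπ)
      _ = τ := by field_simp
  have h3 : τ < (k:ℝ) * (2*Real.pi) + 2*Real.pi := by
    have := Int.lt_floor_add_one (τ / (2*Real.pi))
    have h4 : τ / (2*Real.pi) < (k:ℝ) + 1 := this
    calc τ = (τ/(2*Real.pi)) * (2*Real.pi) := by field_simp
      _ < ((k:ℝ)+1) * (2*Real.pi) := by
          apply mul_lt_mul_of_pos_right h4 hπ
      _ = (k:ℝ) * (2*Real.pi) + 2*Real.pi := by ring
  set τ₀ := τ - k * (2*Real.pi) with hτ₀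
  have hsin : Real.sin τ₀ = Real.sin τ := by
    rw [hτ₀]
    have := Real.sin_sub_int_mul_two_pi τ k
    simpa [mul_comm] using this
  refine ⟨k, ?_, ?_⟩
  · rcases lt_or_ge 0 τ₀ with h1 | h1
    · exact h1
    · exfalso
      have h5 : τ₀ = 0 := le_antisymm h1 (by simp [hτ₀]; linarith)
      rw [h5] at hsin; simp at hsin; linarith
  · rcases lt_or_ge τ₀ Real.pi with h1 | h1
    · exact h1
    · exfalso
      have h5 : Real.sin τ₀ ≤ 0 := by
        have h6 : Real.sin τ₀ = - Real.sin (τ₀ - Real.pi) := by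
          have := Real.sin_sub_pi τ₀
          linarith [this]
        rw [h6]
        have h7 : 0 ≤ Real.sin (τ₀ - Real.pi) :=
          Real.sin_nonneg_of_nonneg_of_le_pi (by linarith) (by simp [hτ₀]; linarith)
        linarith
      linarith

namespace Pack
variable {E : Type*} [NormedAddCommGroup E] [NormedSpace ℝ E]
    {ω : E →ₗ[ℝ] E →ₗ[ℝ] ℝ}

noncomputable def CE (P : Pack E ω) : ℝ := ‖P.e₁‖ + ‖P.e₂‖
noncomputable def M (P : Pack E ω) : ℝ := ‖P.c₁‖ + ‖P.c₂‖
noncomputable def v (P : Pack E ω) (θ : ℝ) : E := Real.cos θ • P.e₁ + Real.sin θ • P.e₂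
noncomputable def q (P : Pack E ω) (θ : ℝ) : ℝ := ‖P.v θ‖⁻¹
noncomputable def xx (P : Pack E ω) (θ : ℝ) : E := P.q θ • P.v θ

theorem c₁v (P : Pack E ω) (θ : ℝ) : P.c₁ (P.v θ) = Real.cos θ := by
  simp [v, map_add, map_smul, P.hc₁e₁, P.hc₁e₂]

theorem c₂v (P : Pack E ω) (θ : ℝ) : P.c₂ (P.v θ) = Real.sin θ := by
  simp [v, map_add, map_smul, P.hc₂e₁, P.hc₂e₂]

theorem e₁_ne (P : Pack E ω) : P.e₁ ≠ 0 := by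
  intro h; have := P.hc₁e₁; rw [h] at this; simp at this

theorem M_pos (P : Pack E ω) : 0 < P.M := by
  have h1 : P.c₁ ≠ 0 := by
    intro h; have := P.hc₁e₁; rw [h] at this; simp at this
  have := norm_pos_iff.mpr h1
  have := norm_nonneg P.c₂
  unfold M; linarith

theorem CE_pos (P : Pack E ω) : 0 < P.CE := by
  have := norm_pos_iff.mpr P.e₁_ne
  have := norm_nonneg P.e₂
  unfold CE; linarith

theorem r_lower (P : Pack E ω) (θ : ℝ) : P.M⁻¹ ≤ ‖P.v θ‖ := by
  have h1 : |Real.cos θ| ≤ ‖P.c₁‖ * ‖P.v θ‖ := by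
    rw [← P.c₁v θ]; exact P.c₁.le_opNorm _
  have h2 : |Real.sin θ| ≤ ‖P.c₂‖ * ‖P.v θ‖ := by
    rw [← P.c₂v θ]; exact P.c₂.le_opNorm _
  have h3 : (1:ℝ) ≤ |Real.cos θ| + |Real.sin θ| := by
    have hc2 : Real.cos θ^2 ≤ |Real.cos θ| := by
      nlinarith [Real.abs_cos_le_one θ, sq_abs (Real.cos θ), abs_nonneg (Real.cos θ)]
    have hs2 : Real.sin θ^2 ≤ |Real.sin θ| := by
      nlinarith [Real.abs_sin_le_one θ, sq_abs (Real.sin θ), abs_nonneg (Real.sin θ)]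
    have := Real.sin_sq_add_cos_sq θ
    linarith
  have h4 : 1 ≤ P.M * ‖P.v θ‖ := by
    unfold M
    calc (1:ℝ) ≤ |Real.cos θ| + |Real.sin θ| := h3
      _ ≤ ‖P.c₁‖ * ‖P.v θ‖ + ‖P.c₂‖ * ‖P.v θ‖ := by linarith
      _ = (‖P.c₁‖ + ‖P.c₂‖) * ‖P.v θ‖ := by ring
  rw [inv_le_iff_one_le_mul₀ P.M_pos]
  linarith

theorem r_pos (P : Pack E ω) (θ : ℝ) : 0 < ‖P.v θ‖ :=
  lt_of_lt_of_le (inv_pos.mpr P.M_pos) (P.r_lower θ)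

theorem v_ne (P : Pack E ω) (θ : ℝ) : P.v θ ≠ 0 :=
  norm_pos_iff.mp (P.r_pos θ)

theorem q_pos (P : Pack E ω) (θ : ℝ) : 0 < P.q θ := by
  unfold q; exact inv_pos.mpr (P.r_pos θ)

theorem q_le_M (P : Pack E ω) (θ : ℝ) : P.q θ ≤ P.M := by
  unfold q
  rw [inv_le_comm₀ (P.r_pos θ) P.M_pos]
  exact P.r_lower θ

theorem r_le_CE (P : Pack E ω) (θ : ℝ) : ‖P.v θ‖ ≤ P.CE := by
  unfold v CE
  calc ‖Real.cos θ • P.e₁ + Real.sin θ • P.e₂‖ ≤ ‖Real.cos θ • P.e₁‖ + ‖Real.sin θ • P.e₂‖ :=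
        norm_add_le _ _
    _ ≤ ‖P.e₁‖ + ‖P.e₂‖ := by
        rw [norm_smul, norm_smul, Real.norm_eq_abs, Real.norm_eq_abs]
        have := Real.abs_cos_le_one θ
        have := Real.abs_sin_le_one θ
        have := norm_nonneg P.e₁
        have := norm_nonneg P.e₂
        nlinarith

theorem norm_xx (P : Pack E ω) (θ : ℝ) : ‖P.xx θ‖ = 1 := by
  unfold xx q
  rw [norm_smul, norm_inv, norm_norm]
  exact inv_mul_cancel₀ (ne_of_gt (P.r_pos θ))

theorem ω_vv (P : Pack E ω) (α β : ℝ) : ω (P.v α) (P.v β) = Real.sin (β - α) := by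
  rw [P.hωc, P.c₁v, P.c₂v, P.c₁v, P.c₂v, Real.sin_sub]
  ring

theorem ω_xx (P : Pack E ω) (α β : ℝ) :
    ω (P.xx α) (P.xx β) = P.q α * P.q β * Real.sin (β - α) := by
  unfold xx
  simp only [map_smul, LinearMap.smul_apply, smul_eq_mul]
  rw [P.ω_vv]; ring

theorem v_pi (P : Pack E ω) (θ : ℝ) : P.v (θ + Real.pi) = - P.v θ := by
  unfold v
  rw [Real.cos_add_pi, Real.sin_add_pi]
  rw [neg_smul, neg_smul, neg_add]

theorem xx_pi (P : Pack E ω) (θ : ℝ) : P.xx (θ + Real.pi) = - P.xx θ := by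
  unfold xx q
  rw [P.v_pi, norm_neg, smul_neg]

theorem v_two_pi (P : Pack E ω) (θ : ℝ) (k : ℤ) : P.v (θ - k * (2*Real.pi)) = P.v θ := by
  unfold v
  rw [Real.cos_sub_int_mul_two_pi, Real.sin_sub_int_mul_two_pi]

theorem xx_two_pi (P : Pack E ω) (θ : ℝ) (k : ℤ) : P.xx (θ - k * (2*Real.pi)) = P.xx θ := by
  unfold xx q
  rw [P.v_two_pi]

theorem v_lip (P : Pack E ω) (α β : ℝ) : ‖P.v α - P.v β‖ ≤ P.CE * |α - β| := by
  have hc := Convex.norm_image_sub_le_of_norm_deriv_le (f := Real.cos) (C := 1) (s := Set.univ)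
    (fun x _ => Real.differentiable_cos.differentiableAt)
    (fun x _ => by rw [Real.deriv_cos]; simp [abs_le, Real.neg_one_le_sin, Real.sin_le_one])
    convex_univ (Set.mem_univ β) (Set.mem_univ α)
  have hs := Convex.norm_image_sub_le_of_norm_deriv_le (f := Real.sin) (C := 1) (s := Set.univ)
    (fun x _ => Real.differentiable_sin.differentiableAt)
    (fun x _ => by rw [Real.deriv_sin]; simp [abs_le, Real.neg_one_le_cos, Real.cos_le_one])
    convex_univ (Set.mem_univ β) (Set.mem_univ α)
  simp only [Real.norm_eq_abs] at hc hs
  unfold v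
  have h1 : Real.cos α • P.e₁ + Real.sin α • P.e₂ - (Real.cos β • P.e₁ + Real.sin β • P.e₂)
      = (Real.cos α - Real.cos β) • P.e₁ + (Real.sin α - Real.sin β) • P.e₂ := by
    rw [sub_smul, sub_smul]; abel
  rw [h1]
  calc ‖(Real.cos α - Real.cos β) • P.e₁ + (Real.sin α - Real.sin β) • P.e₂‖
      ≤ ‖(Real.cos α - Real.cos β) • P.e₁‖ + ‖(Real.sin α - Real.sin β) • P.e₂‖ := norm_add_le _ _
    _ = |Real.cos α - Real.cos β| * ‖P.e₁‖ + |Real.sin α - Real.sin β| * ‖P.e₂‖ := by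
        rw [norm_smul, norm_smul]; simp [Real.norm_eq_abs]
    _ ≤ |α - β| * ‖P.e₁‖ + |α - β| * ‖P.e₂‖ := by
        have := norm_nonneg P.e₁; have := norm_nonneg P.e₂
        apply add_le_add
        · exact mul_le_mul_of_nonneg_right (by simpa using hc) (by assumption)
        · exact mul_le_mul_of_nonneg_right (by simpa using hs) (by assumption)
    _ = P.CE * |α - β| := by unfold CE; ring

noncomputable def Lx (P : Pack E ω) : ℝ := P.CE^2 * P.M^2 + P.M * P.CE

theorem Lx_pos (P : Pack E ω) : 0 < P.Lx := by
  have := P.CE_pos; have := P.M_pos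
  unfold Lx; positivity

theorem xx_lip (P : Pack E ω) (α β : ℝ) : ‖P.xx α - P.xx β‖ ≤ P.Lx * |α - β| := by
  have hq : |P.q α - P.q β| ≤ P.CE * P.M^2 * |α - β| := by
    unfold q
    rw [inv_sub_inv (ne_of_gt (P.r_pos α)) (ne_of_gt (P.r_pos β))]
    rw [abs_div, abs_mul, abs_of_pos (P.r_pos α), abs_of_pos (P.r_pos β)]
    rw [div_le_iff₀ (mul_pos (P.r_pos α) (P.r_pos β))]
    have h1 : |‖P.v β‖ - ‖P.v α‖| ≤ P.CE * |α - β| := by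
      have := abs_norm_sub_norm_le (P.v β) (P.v α)
      have h2 := P.v_lip β α
      have h3 : |β - α| = |α - β| := abs_sub_comm β α
      rw [h3] at h2
      linarith
    have h4 : P.M⁻¹ * P.M⁻¹ ≤ ‖P.v α‖ * ‖P.v β‖ := by
      apply mul_le_mul (P.r_lower α) (P.r_lower β) (le_of_lt (inv_pos.mpr P.M_pos)) (norm_nonneg _)
    have hM := P.M_pos
    have hCE := P.CE_pos
    have habs : (0:ℝ) ≤ |α - β| := abs_nonneg _
    calc |‖P.v β‖ - ‖P.v α‖| ≤ P.CE * |α - β| := h1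
      _ = (P.CE * P.M^2 * |α-β|) * (P.M⁻¹ * P.M⁻¹) := by
          field_simp
      _ ≤ (P.CE * P.M^2 * |α-β|) * (‖P.v α‖ * ‖P.v β‖) := by
          apply mul_le_mul_of_nonneg_left h4
          positivity
  have key : P.xx α - P.xx β = (P.q α - P.q β) • P.v α + P.q β • (P.v α - P.v β) := by
    unfold xx
    rw [sub_smul, smul_sub]; abel
  rw [key]
  calc ‖(P.q α - P.q β) • P.v α + P.q β • (P.v α - P.v β)‖
      ≤ ‖(P.q α - P.q β) • P.v α‖ + ‖P.q β • (P.v α - P.v β)‖ := norm_add_le _ _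
    _ = |P.q α - P.q β| * ‖P.v α‖ + |P.q β| * ‖P.v α - P.v β‖ := by
        rw [norm_smul, norm_smul]; simp [Real.norm_eq_abs]
    _ ≤ (P.CE * P.M^2 * |α - β|) * P.CE + P.M * (P.CE * |α - β|) := by
        apply add_le_add
        · apply mul_le_mul hq (P.r_le_CE α) (norm_nonneg _)
          have := P.CE_pos; have := P.M_pos; positivity
        · apply mul_le_mul _ (P.v_lip α β) (norm_nonneg _) (le_of_lt P.M_pos)
          rw [abs_of_pos (P.q_pos β)]; exact P.q_le_M β
    _ = P.Lx * |α - β| := by unfold Lx; ring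

theorem xx_surj (P : Pack E ω) {u : E} (hu : ‖u‖ = 1) : ∃ θ : ℝ, u = P.xx θ := by
  have hu0 : u ≠ 0 := by intro h; rw [h] at hu; simp at hu
  set z : ℂ := (P.c₁ u : ℂ) + (P.c₂ u : ℂ) * Complex.I with hz
  have hz0 : z ≠ 0 := by
    intro h0
    apply hu0
    have h1 := congrArg Complex.re h0
    have h2 := congrArg Complex.im h0
    simp [hz] at h1 h2
    exact P.coords_zero h1 h2
  set θ := z.arg with hθ
  have habs : (0:ℝ) < ‖z‖ := by
    simpa using norm_pos_iff.mpr hz0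
  have hcos : Real.cos θ = P.c₁ u / ‖z‖ := by
    rw [hθ, Complex.cos_arg hz0]; simp [hz]
  have hsin : Real.sin θ = P.c₂ u / ‖z‖ := by
    rw [hθ, Complex.sin_arg]; simp [hz]
  have hw : u = ‖z‖ • P.v θ := by
    apply sub_eq_zero.mp
    apply P.coords_zero
    · rw [map_sub, map_smul, P.c₁v, hcos, smul_eq_mul]
      field_simp; ring
    · rw [map_sub, map_smul, P.c₂v, hsin, smul_eq_mul]
      field_simp; ring
  have hnv : ‖z‖ * ‖P.v θ‖ = 1 := by
    rw [← hu, hw, norm_smul, Real.norm_eq_abs, abs_of_pos habs]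
  have hq : ‖z‖ = P.q θ := by
    unfold q
    exact eq_inv_of_mul_eq_one_right (by rw [mul_comm] at hnv; exact hnv)
  exact ⟨θ, by rw [hw, hq]; rfl⟩


end Pack

open Filter Topology
/-- A limit of normalized chords of the unit sphere emanating from `x₀` is
Birkhoff-orthogonal to `x₀`. -/
theorem birkhoff_of_chord_limit {E : Type*} [NormedAddCommGroup E] [NormedSpace ℝ E]
    {x₀ u : E} (hx₀ : ‖x₀‖ = 1) {w : ℕ → E} (hw : ∀ n, ‖w n‖ = 1)
    (hne : ∀ n, w n ≠ x₀)
    (hlim : Tendsto (fun n => ‖w n - x₀‖⁻¹ • (w n - x₀)) atTop (nhds u))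
    (hc0 : Tendsto (fun n => ‖w n - x₀‖) atTop (nhds 0)) :
    BirkhoffOrth x₀ u := by
  intro t
  rcases eq_or_ne t 0 with rfl | ht
  · simp [hx₀]
  set c : ℕ → ℝ := fun n => ‖w n - x₀‖ with hc
  have hcpos : ∀ n, 0 < c n := fun n => norm_pos_iff.mpr (sub_ne_zero.mpr (hne n))
  -- pointwise lower bound for large n
  have hbound : ∀ n, c n ≤ |t| → 1 ≤ ‖x₀ + t • ((c n)⁻¹ • (w n - x₀))‖ := by
    intro n hcn
    set s : ℝ := t / c n with hs
    have hcn0 : c n ≠ 0 := ne_of_gt (hcpos n)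
    have hkey : x₀ + t • ((c n)⁻¹ • (w n - x₀)) = x₀ + s • (w n - x₀) := by
      rw [smul_smul, hs, div_eq_mul_inv]
    rw [hkey]
    rcases lt_or_gt_of_ne ht with htneg | htpos
    · -- t < 0, s < 0; write x₀ as convex combination of P and w n
      have hs0 : s < 0 := div_neg_of_neg_of_pos htneg (hcpos n)
      set σ : ℝ := -s with hσ
      have hσ0 : 0 < σ := by simp [hσ]; linarith
      set Pt : E := x₀ + s • (w n - x₀) with hPt
      have hconv : x₀ = (1+σ)⁻¹ • Pt + (σ/(1+σ)) • w n := by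
        rw [hPt]
        have h1σ : (1:ℝ)+σ ≠ 0 := by positivity
        rw [smul_add, smul_smul, smul_sub]
        have hss : s = -σ := by simp [hσ]
        rw [hss]
        rw [← sub_eq_zero]
        have : ((1+σ)⁻¹ * -σ) = -(σ/(1+σ)) := by field_simp
        rw [this]
        have hx : x₀ - ((1+σ)⁻¹ • x₀ + (-(σ/(1+σ)) • w n - -(σ/(1+σ)) • x₀) + (σ/(1+σ)) • w n) =
            (1 - (1+σ)⁻¹ - σ/(1+σ)) • x₀ := by
          rw [sub_smul, sub_smul]
          simp only [one_smul, neg_smul]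
          abel
        rw [hx]
        have : (1 - (1+σ)⁻¹ - σ/(1+σ)) = 0 := by field_simp; ring
        rw [this, zero_smul]
      have h1 : (1:ℝ) = ‖x₀‖ := hx₀.symm
      have h2 : ‖x₀‖ ≤ (1+σ)⁻¹ * ‖Pt‖ + σ/(1+σ) := by
        calc ‖x₀‖ = ‖(1+σ)⁻¹ • Pt + (σ/(1+σ)) • w n‖ := by rw [← hconv]
          _ ≤ ‖(1+σ)⁻¹ • Pt‖ + ‖(σ/(1+σ)) • w n‖ := norm_add_le _ _
          _ = (1+σ)⁻¹ * ‖Pt‖ + σ/(1+σ) := by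
              rw [norm_smul, norm_smul, hw n]
              rw [Real.norm_eq_abs, Real.norm_eq_abs]
              rw [abs_of_pos (by positivity), abs_of_pos (by positivity)]
              ring
      -- conclude ‖Pt‖ ≥ 1
      by_contra hlt
      push_neg at hlt
      have h1σ : (0:ℝ) < 1+σ := by positivity
      rw [← h1] at h2
      have : (1:ℝ) ≤ (1+σ)⁻¹ * ‖Pt‖ + σ/(1+σ) := h2
      have hPtlt : (1+σ)⁻¹ * ‖Pt‖ < (1+σ)⁻¹ * 1 := by
        apply mul_lt_mul_of_pos_left hlt (inv_pos.mpr h1σ)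
      have : (1:ℝ) < (1+σ)⁻¹ + σ/(1+σ) := by
        calc (1:ℝ) ≤ (1+σ)⁻¹ * ‖Pt‖ + σ/(1+σ) := this
          _ < (1+σ)⁻¹ * 1 + σ/(1+σ) := by linarith
          _ = (1+σ)⁻¹ + σ/(1+σ) := by ring
      have : (1+σ)⁻¹ + σ/(1+σ) = 1 := by field_simp
      linarith
    · -- t > 0 case; need c n ≤ t, i.e. s ≥ 1
      have hs1 : 1 ≤ s := by
        rw [hs, le_div_iff₀ (hcpos n)]
        rw [abs_of_pos htpos] at hcn
        linarith
      have hs0 : 0 < s := lt_of_lt_of_le one_pos hs1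
      set Pt : E := x₀ + s • (w n - x₀) with hPt
      have hconv : w n = s⁻¹ • Pt + (1 - s⁻¹) • x₀ := by
        rw [hPt, smul_add, smul_smul]
        have : s⁻¹ * s = 1 := inv_mul_cancel₀ (ne_of_gt hs0)
        rw [this, one_smul, sub_smul, one_smul]
        abel
      have h2 : (1:ℝ) ≤ s⁻¹ * ‖Pt‖ + (1 - s⁻¹) := by
        calc (1:ℝ) = ‖w n‖ := (hw n).symm
          _ = ‖s⁻¹ • Pt + (1 - s⁻¹) • x₀‖ := by rw [← hconv]
          _ ≤ ‖s⁻¹ • Pt‖ + ‖(1-s⁻¹) • x₀‖ := norm_add_le _ _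
          _ = s⁻¹ * ‖Pt‖ + (1 - s⁻¹) := by
              rw [norm_smul, norm_smul, hx₀, Real.norm_eq_abs, Real.norm_eq_abs]
              rw [abs_of_pos (inv_pos.mpr hs0), abs_of_nonneg (by
                have : s⁻¹ ≤ 1 := by
                  rw [inv_le_one_iff₀]; right; exact hs1
                linarith)]
              ring
      by_contra hlt
      push_neg at hlt
      have : s⁻¹ * ‖Pt‖ < s⁻¹ * 1 := mul_lt_mul_of_pos_left hlt (inv_pos.mpr hs0)
      linarith
  -- take limits
  have hev : ∀ᶠ n in atTop, 1 ≤ ‖x₀ + t • ((c n)⁻¹ • (w n - x₀))‖ := by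
    have : ∀ᶠ n in atTop, c n ≤ |t| := by
      have habs : (0:ℝ) < |t| := abs_pos.mpr ht
      exact hc0.eventually_le_const habs
    exact this.mono hbound
  have hcont : Tendsto (fun n => ‖x₀ + t • ((c n)⁻¹ • (w n - x₀))‖) atTop
      (nhds ‖x₀ + t • u‖) := by
    apply Tendsto.norm
    exact tendsto_const_nhds.add (hlim.const_smul t)
  rw [hx₀]
  exact ge_of_tendsto hcont hev

/-- A Lipschitz function whose right lower Dini derivative is everywhere `≥ 0`
(in the ε-form below) is nondecreasing. -/
theorem mono_of_dini {f : ℝ → ℝ} {L : ℝ}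
    (hlip : ∀ s t : ℝ, |f s - f t| ≤ L * |s - t|)
    (hdini : ∀ θ₀ : ℝ, ∀ ε : ℝ, 0 < ε → ∃ δ, 0 < δ ∧ ∀ θ, θ₀ < θ → θ < θ₀ + δ →
      f θ₀ - ε * (θ - θ₀) ≤ f θ) :
    ∀ s t : ℝ, s ≤ t → f s ≤ f t := by
  intro s t hst
  have key : ∀ ε : ℝ, 0 < ε → f s - ε * (t - s) ≤ f t := by
    intro ε hε
    set W : Set ℝ := {τ | τ ∈ Set.Icc s t ∧ ∀ σ ∈ Set.Icc s τ, f s - ε * (σ - s) ≤ f σ} with hW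
    have hsW : s ∈ W := by
      constructor
      · exact ⟨le_refl s, hst⟩
      · intro σ hσ
        have : σ = s := le_antisymm hσ.2 hσ.1
        rw [this]
        simp
    have hbdd : BddAbove W := ⟨t, fun τ hτ => hτ.1.2⟩
    have hne : W.Nonempty := ⟨s, hsW⟩
    set T := sSup W with hT
    have hTmem : T ∈ Set.Icc s t := by
      constructor
      · exact le_csSup hbdd hsW
      · exact csSup_le hne (fun τ hτ => hτ.1.2)
    have hTW : T ∈ W := by
      refine ⟨hTmem, ?_⟩
      intro σ hσ
      rcases eq_or_lt_of_le hσ.2 with heq | hσT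
      · -- σ = T : approximate from below
        rw [heq]
        have hTs : s ≤ T := hTmem.1
        by_contra hcon
        push_neg at hcon
        have hL0 : 0 ≤ L := by
          have := hlip 0 1
          simp at this
          linarith [abs_nonneg (f 0 - f 1)]
        set η : ℝ := (f s - ε * (T - s) - f T) / (L + 1) with hη
        have hηpos : 0 < η := by
          apply div_pos _ (by linarith)
          linarith
        obtain ⟨τ, hτW, hτgt⟩ := exists_lt_of_lt_csSup hne (by
          show T - η < T
          linarith)
        have hττ : f s - ε * (τ - s) ≤ f τ := hτW.2 τ ⟨hτW.1.1, le_refl τ⟩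
        have hτleT : τ ≤ T := le_csSup hbdd hτW
        have hfτ : f T ≥ f τ - L * (T - τ) := by
          have h1 := hlip T τ
          have habs : |T - τ| = T - τ := abs_of_nonneg (by linarith)
          rw [habs] at h1
          have h2 := abs_le.mp h1
          linarith [h2.1]
        have hτs : ε * (τ - s) ≤ ε * (T - s) :=
          mul_le_mul_of_nonneg_left (by linarith) (le_of_lt hε)
        have hTτη : T - τ < η := by linarith
        have hbig : f T > f s - ε * (T - s) - L * η := by nlinarith
        have hcalc : (L+1) * η = f s - ε * (T - s) - f T := by
          rw [hη]; field_simp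
        nlinarith
      · -- σ < T : some τ ∈ W exceeds σ
        obtain ⟨τ, hτW, hτgt⟩ := exists_lt_of_lt_csSup hne hσT
        exact hτW.2 σ ⟨hσ.1, le_of_lt hτgt⟩
    rcases eq_or_lt_of_le hTmem.2 with hTt | hTt
    · -- T = t: done
      have := hTW.2 t (by rw [hTt]; exact ⟨hst, le_refl t⟩)
      exact this
    · -- T < t: contradiction via dini
      exfalso
      obtain ⟨δ, hδ, hd⟩ := hdini T ε hε
      set θ := min t (T + δ/2) with hθ
      have hθT : T < θ := by
        apply lt_min hTt
        linarith
      have hθW : θ ∈ W := by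
        refine ⟨⟨le_trans hTmem.1 (le_of_lt hθT), min_le_left _ _⟩, ?_⟩
        intro σ hσ
        rcases le_or_gt σ T with h1 | h1
        · exact hTW.2 σ ⟨hσ.1, h1⟩
        · have h2 : σ < T + δ := by
            have := hσ.2
            have : σ ≤ T + δ/2 := le_trans this (min_le_right _ _)
            linarith
          have := hd σ h1 h2
          have hTs := hTW.2 T ⟨hTmem.1, le_refl T⟩
          have hεσ : ε * (T - s) + ε * (σ - T) = ε * (σ - s) := by ring
          linarith
      have : θ ≤ T := le_csSup hbdd hθW
      linarith
  -- now let ε → 0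
  rcases eq_or_lt_of_le hst with rfl | hlt
  · exact le_rfl
  · by_contra hcon
    push_neg at hcon
    set ε := (f s - f t) / (2 * (t - s)) with hε
    have hεpos : 0 < ε := by
      apply div_pos (by linarith) (by linarith)
    have := key ε hεpos
    rw [hε] at this
    have hts : t - s ≠ 0 := by
      intro h0
      have : t = s := by linarith
      rw [this] at hlt
      exact lt_irrefl s hlt
    have hcalc : (f s - f t) / (2 * (t - s)) * (t - s) = (f s - f t)/2 := by
      field_simp
    rw [hcalc] at this
    linarith

namespace Pack
variable {E : Type*} [NormedAddCommGroup E] [NormedSpace ℝ E]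
    {ω : E →ₗ[ℝ] E →ₗ[ℝ] ℝ} [FiniteDimensional ℝ E] [Nontrivial E]

noncomputable def aa (P : Pack E ω) (θ : ℝ) : ℝ := antinorm ω (P.xx θ)

theorem xx_ne (P : Pack E ω) (θ : ℝ) : P.xx θ ≠ 0 := by
  intro h
  have := P.norm_xx θ
  rw [h] at this
  simp at this

theorem aa_pos (P : Pack E ω) (θ : ℝ) : 0 < P.aa θ := P.antinorm_pos (P.xx_ne θ)

theorem aa_lip (P : Pack E ω) (α β : ℝ) : |P.aa α - P.aa β| ≤ (P.K * P.Lx) * |α - β| := by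
  calc |P.aa α - P.aa β| ≤ P.K * ‖P.xx α - P.xx β‖ := P.antinorm_lip _ _
    _ ≤ P.K * (P.Lx * |α - β|) := mul_le_mul_of_nonneg_left (P.xx_lip α β) P.K_nonneg
    _ = (P.K * P.Lx) * |α - β| := by ring

theorem aa_pi (P : Pack E ω) (θ : ℝ) : P.aa (θ + Real.pi) = P.aa θ := by
  unfold aa
  rw [P.xx_pi]
  have : -P.xx θ = (-1 : ℝ) • P.xx θ := by simp
  rw [this, P.antinorm_smul]
  simp

theorem q_cont (P : Pack E ω) : Continuous P.q := by
  have hv : Continuous P.v := by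
    unfold v
    exact (Real.continuous_cos.smul continuous_const).add
      (Real.continuous_sin.smul continuous_const)
  exact (hv.norm).inv₀ (fun θ => ne_of_gt (P.r_pos θ))

/-- existence of the extreme (largest-angle) Birkhoff partner -/
theorem exists_phimax (P : Pack E ω) (θ₀ : ℝ) :
    ∃ φm : ℝ, θ₀ < φm ∧ φm < θ₀ + Real.pi ∧
      ω (P.xx θ₀) (P.xx φm) = P.aa θ₀ ∧
      ∀ ψ, θ₀ < ψ → ψ < θ₀ + Real.pi →
        |ω (P.xx ψ) (P.xx θ₀)| = P.aa θ₀ → ψ ≤ φm := by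
  have hπ := Real.pi_pos
  set g : ℝ → ℝ := fun φ => ω (P.xx θ₀) (P.xx φ) with hg
  have hgval : ∀ φ, g φ = P.q θ₀ * P.q φ * Real.sin (φ - θ₀) := fun φ => P.ω_xx θ₀ φ
  have hgcont : Continuous g := by
    have : g = fun φ => P.q θ₀ * P.q φ * Real.sin (φ - θ₀) := funext hgval
    rw [this]
    exact (continuous_const.mul P.q_cont).mul
      ((Real.continuous_sin).comp (continuous_id.sub continuous_const))
  set Φ : Set ℝ := Set.Icc θ₀ (θ₀ + Real.pi) ∩ {φ | g φ = P.aa θ₀} with hΦ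
  have hclosed : IsClosed Φ := isClosed_Icc.inter (isClosed_eq hgcont continuous_const)
  have hbdd : BddAbove Φ := ⟨θ₀ + Real.pi, fun φ hφ => hφ.1.2⟩
  -- nonempty
  have hmem_of : ∀ ψ : ℝ, |ω (P.xx θ₀) (P.xx ψ)| = P.aa θ₀ → 0 < Real.sin (ψ - θ₀) →
      ∃ φ ∈ Φ, True := by
    intro ψ habs hsin
    obtain ⟨k, hk1, hk2⟩ := ang_reduce hsin
    set φ := ψ - k * (2*Real.pi) with hφdef
    have hxxφ : P.xx φ = P.xx ψ := P.xx_two_pi ψ k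
    have hsinφ : Real.sin (φ - θ₀) = Real.sin (ψ - θ₀) := by
      rw [hφdef]
      have : ψ - k * (2*Real.pi) - θ₀ = (ψ - θ₀) - k * (2*Real.pi) := by ring
      rw [this, Real.sin_sub_int_mul_two_pi]
    have hφIcc : φ ∈ Set.Icc θ₀ (θ₀ + Real.pi) := by
      constructor
      · have : φ - θ₀ = ψ - θ₀ - k*(2*Real.pi) := by rw [hφdef]; ring
        nlinarith [hk1, this]
      · have : φ - θ₀ = ψ - θ₀ - k*(2*Real.pi) := by rw [hφdef]; ring
        nlinarith [hk2, this]
    refine ⟨φ, ⟨hφIcc, ?_⟩, trivial⟩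
    show g φ = P.aa θ₀
    have h1 : g φ = ω (P.xx θ₀) (P.xx ψ) := by rw [hg]; simp only; rw [hxxφ]
    have h2 : 0 < g φ := by
      rw [hgval, hsinφ]
      have := P.q_pos θ₀
      have := P.q_pos φ
      positivity
    rcases abs_cases (ω (P.xx θ₀) (P.xx ψ)) with ⟨he, _⟩ | ⟨he, _⟩
    · rw [h1, ← habs, he]
    · exfalso
      rw [h1] at h2
      rw [← habs] at *
      have : |ω (P.xx θ₀) (P.xx ψ)| < 0 := by
        rw [he] at *
        linarith
      linarith [abs_nonneg (ω (P.xx θ₀) (P.xx ψ))]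
  have hne : Φ.Nonempty := by
    obtain ⟨z, hz, hval⟩ := P.attained (P.xx θ₀)
    obtain ⟨ψ₁, hψ₁⟩ := P.xx_surj hz
    have habs1 : |ω (P.xx θ₀) (P.xx ψ₁)| = P.aa θ₀ := by
      rw [← hψ₁, P.anti (P.xx θ₀) z, abs_neg]
      exact hval
    have hsin_ne : Real.sin (ψ₁ - θ₀) ≠ 0 := by
      intro h0
      have : ω (P.xx θ₀) (P.xx ψ₁) = 0 := by
        rw [P.ω_xx, h0, mul_zero]
      rw [this] at habs1
      simp at habs1
      linarith [P.aa_pos θ₀]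
    rcases lt_or_gt_of_ne hsin_ne with hneg | hpos
    · -- use ψ₁ + π
      have habs2 : |ω (P.xx θ₀) (P.xx (ψ₁ + Real.pi))| = P.aa θ₀ := by
        rw [P.xx_pi]
        rw [map_neg, abs_neg]
        exact habs1
      have hsin2 : 0 < Real.sin (ψ₁ + Real.pi - θ₀) := by
        have : ψ₁ + Real.pi - θ₀ = (ψ₁ - θ₀) + Real.pi := by ring
        rw [this, Real.sin_add_pi]
        linarith
      obtain ⟨φ, hφ, _⟩ := hmem_of (ψ₁ + Real.pi) habs2 hsin2
      exact ⟨φ, hφ⟩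
    · obtain ⟨φ, hφ, _⟩ := hmem_of ψ₁ habs1 hpos
      exact ⟨φ, hφ⟩
  set φm := sSup Φ with hφm
  have hφmΦ : φm ∈ Φ := hclosed.csSup_mem hne hbdd
  have hgφm : g φm = P.aa θ₀ := hφmΦ.2
  have hsinφm : Real.sin (φm - θ₀) ≠ 0 := by
    intro h0
    rw [hgval, h0, mul_zero] at hgφm
    linarith [P.aa_pos θ₀]
  have hlo : θ₀ < φm := by
    rcases eq_or_lt_of_le hφmΦ.1.1 with heq | h
    · exfalso; apply hsinφm; rw [← heq]; simp
    · exact h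
  have hhi : φm < θ₀ + Real.pi := by
    rcases eq_or_lt_of_le hφmΦ.1.2 with heq | h
    · exfalso; apply hsinφm; rw [heq]
      have : θ₀ + Real.pi - θ₀ = Real.pi := by ring
      rw [this, Real.sin_pi]
    · exact h
  refine ⟨φm, hlo, hhi, hgφm, ?_⟩
  intro ψ hψ1 hψ2 habs
  apply le_csSup hbdd
  refine ⟨⟨le_of_lt hψ1, le_of_lt hψ2⟩, ?_⟩
  show g ψ = P.aa θ₀
  have h1 : |g ψ| = P.aa θ₀ := by
    rw [hg]
    simp only
    rw [P.anti (P.xx θ₀) (P.xx ψ), abs_neg]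
    exact habs
  have h2 : 0 ≤ g ψ := by
    rw [hgval]
    have hsin : 0 ≤ Real.sin (ψ - θ₀) :=
      Real.sin_nonneg_of_nonneg_of_le_pi (by linarith) (by linarith)
    have := P.q_pos θ₀
    have := P.q_pos ψ
    positivity
  rw [← h1, abs_of_nonneg h2]

end Pack

namespace Pack
variable {E : Type*} [NormedAddCommGroup E] [NormedSpace ℝ E]
    {ω : E →ₗ[ℝ] E →ₗ[ℝ] ℝ} [FiniteDimensional ℝ E] [Nontrivial E]

theorem omega_cont (P : Pack E ω) (z : E) : Continuous (fun w => ω z w) := by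
  have : (fun w => ω z w) = fun w => P.c₁ z * P.c₂ w - P.c₂ z * P.c₁ w :=
    funext (fun w => P.hωc z w)
  rw [this]
  exact (continuous_const.mul P.c₂.continuous).sub (continuous_const.mul P.c₁.continuous)

/-- The crucial one-sided estimate: the antinorm along the unit circle does not
decrease at linear rate to the right. -/
theorem dini_step (P : Pack E ω)
    (hsym : ∀ x y : E, BirkhoffOrth x y → BirkhoffOrth y x)
    (θ₀ : ℝ) (ε : ℝ) (hε : 0 < ε) :
    ∃ δ, 0 < δ ∧ ∀ θ, θ₀ < θ → θ < θ₀ + δ → P.aa θ₀ - ε * (θ - θ₀) ≤ P.aa θ := by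
  by_contra hcon
  push_neg at hcon
  obtain ⟨φm, hlo, hhi, hωφm, hmax⟩ := P.exists_phimax θ₀
  set x₀ := P.xx θ₀ with hx₀def
  set y := P.xx φm with hydef
  set a₀ := P.aa θ₀ with ha₀def
  have hy1 : ‖y‖ = 1 := P.norm_xx φm
  have hx₀1 : ‖x₀‖ = 1 := P.norm_xx θ₀
  have hωyx₀ : ω y x₀ = - a₀ := by
    rw [P.anti y x₀, hωφm]
  -- the bad sequence
  have hseq : ∀ n : ℕ, ∃ θ, θ₀ < θ ∧ θ < θ₀ + 1/((n:ℝ)+1) ∧ P.aa θ < a₀ - ε * (θ - θ₀) := by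
    intro n
    obtain ⟨θ, h1, h2, h3⟩ := hcon (1/((n:ℝ)+1)) (by positivity)
    exact ⟨θ, h1, h2, h3⟩
  choose θs hθ1 hθ2 hθ3 using hseq
  set Δ : ℕ → ℝ := fun n => θs n - θ₀ with hΔdef
  have hΔpos : ∀ n, 0 < Δ n := fun n => sub_pos.mpr (hθ1 n)
  have hΔle : ∀ n, Δ n ≤ 1/((n:ℝ)+1) := fun n => by
    have := hθ2 n
    show θs n - θ₀ ≤ _
    linarith
  have hΔ0 : Tendsto Δ atTop (nhds 0) := by
    apply squeeze_zero (fun n => le_of_lt (hΔpos n)) hΔle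
    exact tendsto_one_div_add_atTop_nhds_zero_nat
  -- key inequality: the functional ω y · drops too fast
  have hD : ∀ n, ε * Δ n < ω y (P.xx (θs n) - x₀) := by
    intro n
    have h1 : |ω y (P.xx (θs n))| ≤ P.aa (θs n) := P.le_antinorm hy1 _
    have h2 : - ω y (P.xx (θs n)) ≤ P.aa (θs n) := by
      rcases abs_cases (ω y (P.xx (θs n))) with ⟨he, _⟩ | ⟨he, _⟩
      · rw [he] at h1; linarith [P.aa_pos (θs n)]
      · rw [he] at h1; linarith
    have h3 := hθ3 n
    have h4 : ω y (P.xx (θs n) - x₀) = ω y (P.xx (θs n)) + a₀ := by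
      rw [map_sub, hωyx₀]; ring
    rw [h4]
    have : - ω y (P.xx (θs n)) < a₀ - ε * Δ n := lt_of_le_of_lt h2 h3
    linarith
  have hne : ∀ n, P.xx (θs n) - x₀ ≠ 0 := by
    intro n h0
    have := hD n
    rw [h0, map_zero] at this
    nlinarith [hΔpos n]
  set c : ℕ → ℝ := fun n => ‖P.xx (θs n) - x₀‖ with hcdef
  have hcpos : ∀ n, 0 < c n := fun n => norm_pos_iff.mpr (hne n)
  have hcle : ∀ n, c n ≤ P.Lx * Δ n := by
    intro n
    have := P.xx_lip (θs n) θ₀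
    have habs : |θs n - θ₀| = Δ n := abs_of_pos (hΔpos n)
    rw [habs] at this
    exact this
  have hc0 : Tendsto c atTop (nhds 0) := by
    apply squeeze_zero (fun n => le_of_lt (hcpos n)) hcle
    have := hΔ0.const_mul P.Lx
    simpa using this
  set uhat : ℕ → E := fun n => (c n)⁻¹ • (P.xx (θs n) - x₀) with huhat
  have huhat_sphere : ∀ n, uhat n ∈ Metric.sphere (0:E) 1 := by
    intro n
    rw [mem_sphere_zero_iff_norm, huhat]
    simp only
    rw [norm_smul, Real.norm_eq_abs, abs_of_pos (inv_pos.mpr (hcpos n))]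
    exact inv_mul_cancel₀ (ne_of_gt (hcpos n))
  obtain ⟨u, hu_sphere, φs, hφs, hconv⟩ :=
    (isCompact_sphere (0:E) 1).tendsto_subseq huhat_sphere
  have hu1 : ‖u‖ = 1 := mem_sphere_zero_iff_norm.mp hu_sphere
  -- Birkhoff orthogonality of the chord limit
  have hbo : BirkhoffOrth x₀ u := by
    apply birkhoff_of_chord_limit hx₀1 (w := fun k => P.xx (θs (φs k)))
      (fun k => P.norm_xx _) (fun k => sub_ne_zero.mp (hne (φs k)))
    · exact hconv
    · exact hc0.comp hφs.tendsto_atTop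
  -- positivity of ω x₀ u
  have hπ3 : (3:ℝ) < Real.pi := Real.pi_gt_three
  have hωx₀u_nonneg : 0 ≤ ω x₀ u := by
    have hterm : ∀ n, 0 ≤ ω x₀ (uhat n) := by
      intro n
      have h1 : ω x₀ (uhat n) = (c n)⁻¹ * ω x₀ (P.xx (θs n) - x₀) := by
        rw [huhat]
        simp only [map_smul, smul_eq_mul]
      rw [h1]
      apply mul_nonneg (le_of_lt (inv_pos.mpr (hcpos n)))
      have h2 : ω x₀ (P.xx (θs n) - x₀) = ω x₀ (P.xx (θs n)) := by
        rw [map_sub, P.self0 x₀, sub_zero]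
      rw [h2, hx₀def, P.ω_xx θ₀ (θs n)]
      have hsin : 0 ≤ Real.sin (θs n - θ₀) := by
        apply Real.sin_nonneg_of_nonneg_of_le_pi (le_of_lt (hΔpos n))
        have := hΔle n
        have hn1 : 1/((n:ℝ)+1) ≤ 1 := by
          rw [div_le_one (by positivity)]
          simp
        show θs n - θ₀ ≤ Real.pi
        linarith
      have := P.q_pos θ₀
      have := P.q_pos (θs n)
      positivity
    have hlim : Tendsto (fun k => ω x₀ (uhat (φs k))) atTop (nhds (ω x₀ u)) :=
      ((P.omega_cont x₀).tendsto u).comp hconv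
    exact ge_of_tendsto hlim (Eventually.of_forall (fun k => hterm (φs k)))
  have hωx₀u_ne : ω x₀ u ≠ 0 := by
    intro h0
    obtain ⟨sc, hu_eq⟩ := P.dep_of_omega_zero h0 (P.xx_ne θ₀)
    have hsc : sc ≠ 0 := by
      intro h1
      rw [h1, zero_smul] at hu_eq
      rw [hu_eq] at hu1
      simp at hu1
    rw [hu_eq] at hbo
    exact P.not_birkhoff_self (P.xx_ne θ₀) hsc hbo
  -- lower bound for ω y u
  have hyu : ε / P.Lx ≤ ω y u := by
    have hstep : ∀ n, ε / P.Lx ≤ ω y (uhat n) := by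
      intro n
      have h1 : ω y (uhat n) = (c n)⁻¹ * ω y (P.xx (θs n) - x₀) := by
        rw [huhat]
        simp only [map_smul, smul_eq_mul]
      rw [h1, inv_mul_eq_div, div_le_div_iff₀ P.Lx_pos (hcpos n)]
      have h2 : ε * c n ≤ ε * (P.Lx * Δ n) :=
        mul_le_mul_of_nonneg_left (hcle n) (le_of_lt hε)
      nlinarith [hD n, P.Lx_pos]
    have hlim : Tendsto (fun k => ω y (uhat (φs k))) atTop (nhds (ω y u)) :=
      ((P.omega_cont y).tendsto u).comp hconv
    exact ge_of_tendsto hlim (Eventually.of_forall (fun k => hstep (φs k)))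
  have hyu_pos : 0 < ω y u := lt_of_lt_of_le (div_pos hε P.Lx_pos) hyu
  -- identify u on the circle
  obtain ⟨ψ, hψ⟩ := P.xx_surj hu1
  have hωx₀u_pos : 0 < ω x₀ u := lt_of_le_of_ne hωx₀u_nonneg (Ne.symm hωx₀u_ne)
  have hsinψ : 0 < Real.sin (ψ - θ₀) := by
    have h1 : ω x₀ u = P.q θ₀ * P.q ψ * Real.sin (ψ - θ₀) := by
      rw [hψ, hx₀def, P.ω_xx θ₀ ψ]
    rw [h1] at hωx₀u_pos
    by_contra hns
    push_neg at hns
    have hqq : 0 < P.q θ₀ * P.q ψ := mul_pos (P.q_pos θ₀) (P.q_pos ψ)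
    nlinarith [hqq, hns]
  obtain ⟨k, hk1, hk2⟩ := ang_reduce hsinψ
  set φu := ψ - k * (2*Real.pi) with hφudef
  have hφu1 : θ₀ < φu := by
    have : ψ - θ₀ - k*(2*Real.pi) = φu - θ₀ := by rw [hφudef]; ring
    rw [this] at hk1
    linarith
  have hφu2 : φu < θ₀ + Real.pi := by
    have : ψ - θ₀ - k*(2*Real.pi) = φu - θ₀ := by rw [hφudef]; ring
    rw [this] at hk2
    linarith
  have hxxφu : P.xx φu = u := by
    rw [hφudef, P.xx_two_pi ψ k, hψ]
  -- symmetry: u is Birkhoff-orthogonal to x₀, so φu is a partner angle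
  have hbo2 : BirkhoffOrth u x₀ := hsym _ _ hbo
  have habs : |ω (P.xx φu) x₀| = a₀ := by
    rw [hxxφu]
    have := (P.birkhoff_iff u x₀).mp hbo2
    rw [hu1, one_mul] at this
    exact this
  have hle : φu ≤ φm := hmax φu hφu1 hφu2 habs
  -- final contradiction
  have hfin : ω y u = P.q φm * P.q φu * Real.sin (φu - φm) := by
    rw [← hxxφu, hydef, P.ω_xx φm φu]
  have hsinneg : Real.sin (φu - φm) ≤ 0 := by
    have h1 : Real.sin (φu - φm) = - Real.sin (φm - φu) := by
      rw [← Real.sin_neg]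
      congr 1
      ring
    rw [h1, neg_nonpos]
    apply Real.sin_nonneg_of_nonneg_of_le_pi
    · linarith
    · linarith
  have : ω y u ≤ 0 := by
    rw [hfin]
    have hqq : 0 < P.q φm * P.q φu := mul_pos (P.q_pos φm) (P.q_pos φu)
    nlinarith [hqq, hsinneg]
  linarith

/-- the circle function `aa` is constant under symmetry -/
theorem aa_const (P : Pack E ω)
    (hsym : ∀ x y : E, BirkhoffOrth x y → BirkhoffOrth y x) (α β : ℝ) :
    P.aa α = P.aa β := by
  have hπ := Real.pi_pos
  have hmono : ∀ s t : ℝ, s ≤ t → P.aa s ≤ P.aa t :=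
    mono_of_dini (fun s t => P.aa_lip s t) (fun θ₀ ε hε => P.dini_step hsym θ₀ ε hε)
  have hper : ∀ (γ : ℝ) (n : ℕ), P.aa (γ + n * Real.pi) = P.aa γ := by
    intro γ n
    induction n with
    | zero => simp
    | succ m ih =>
        have : γ + (m+1 : ℕ) * Real.pi = (γ + m * Real.pi) + Real.pi := by
          push_cast; ring
        rw [this, P.aa_pi, ih]
  have key : ∀ γ δ' : ℝ, γ ≤ δ' → P.aa δ' ≤ P.aa γ := by
    intro γ δ' hle
    obtain ⟨n, hn⟩ := exists_nat_ge ((δ' - γ)/Real.pi)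
    have hδn : δ' ≤ γ + n * Real.pi := by
      have : (δ' - γ) ≤ n * Real.pi := by
        rw [div_le_iff₀ hπ] at hn
        linarith
      linarith
    calc P.aa δ' ≤ P.aa (γ + n * Real.pi) := hmono _ _ hδn
      _ = P.aa γ := hper γ n
  rcases le_total α β with h | h
  · exact le_antisymm (hmono _ _ h) (key _ _ h)
  · exact le_antisymm (key _ _ h) (hmono _ _ h)

theorem hard_direction (P : Pack E ω)
    (hsym : ∀ x y : E, BirkhoffOrth x y → BirkhoffOrth y x) :
    ∃ lam : ℝ, 0 < lam ∧ ∀ x : E, ‖x‖ = lam * antinorm ω x := by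
  set cA := P.aa 0 with hcA
  have hcApos : 0 < cA := P.aa_pos 0
  refine ⟨cA⁻¹, inv_pos.mpr hcApos, ?_⟩
  intro x
  rcases eq_or_ne x 0 with rfl | hx
  · rw [P.antinorm_zero]
    simp
  · have hxn : ‖x‖ ≠ 0 := norm_ne_zero_iff.mpr hx
    set u := ‖x‖⁻¹ • x with hu
    have hu1 : ‖u‖ = 1 := by
      rw [hu, norm_smul, norm_inv, norm_norm, inv_mul_cancel₀ hxn]
    obtain ⟨θ, hθ⟩ := P.xx_surj hu1
    have hAu : antinorm ω u = cA := by
      rw [hθ]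
      exact P.aa_const hsym θ 0
    have hxu : x = ‖x‖ • u := by
      rw [hu, smul_smul, mul_inv_cancel₀ hxn, one_smul]
    have : antinorm ω x = ‖x‖ * cA := by
      conv_lhs => rw [hxu]
      rw [P.antinorm_smul, abs_norm, hAu]
    rw [this]
    field_simp

theorem easy_direction (P : Pack E ω) {lam : ℝ} (hlam : 0 < lam)
    (h : ∀ x : E, ‖x‖ = lam * antinorm ω x) :
    ∀ x y : E, BirkhoffOrth x y → BirkhoffOrth y x := by
  intro x y hxy
  rw [P.birkhoff_iff] at hxy ⊢
  have h1 : |ω y x| = |ω x y| := by rw [P.anti y x, abs_neg]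
  have h2 : antinorm ω y = ‖y‖ / lam := by
    rw [h y]; field_simp
  have h3 : antinorm ω x = ‖x‖ / lam := by
    rw [h x]; field_simp
  rw [h1, hxy, h2, h3]
  field_simp

end Pack

open Module in
theorem pack_exists {E : Type*} [NormedAddCommGroup E] [NormedSpace ℝ E]
    (hdim : Module.finrank ℝ E = 2)
    (ω : E →ₗ[ℝ] E →ₗ[ℝ] ℝ) (halt : ∀ x : E, ω x x = 0) (hω : ω ≠ 0) :
    Nonempty (Pack E ω) := by
  have hfd : FiniteDimensional ℝ E := FiniteDimensional.of_finrank_eq_succ hdim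
  have b : Basis (Fin 2) ℝ E := by
    have := finBasis ℝ E
    rwa [hdim] at this
  -- antisymmetry
  have hanti : ∀ x y : E, ω x y = - ω y x := by
    intro x y
    have h := halt (x + y)
    simp only [map_add, LinearMap.add_apply, halt] at h
    linarith
  -- expansion in any pair of coordinates
  have hexp : ∀ (f₁ f₂ : E) (x y : E) (a₁ a₂ b₁ b₂ : ℝ),
      x = a₁ • f₁ + a₂ • f₂ → y = b₁ • f₁ + b₂ • f₂ →
      ω x y = (a₁ * b₂ - a₂ * b₁) * ω f₁ f₂ := by
    intro f₁ f₂ x y a₁ a₂ b₁ b₂ hx hy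
    subst hx; subst hy
    simp only [map_add, map_smul, LinearMap.add_apply, LinearMap.smul_apply, smul_eq_mul]
    rw [halt f₁, halt f₂, hanti f₂ f₁]
    ring
  set d : ℝ := ω (b 0) (b 1) with hd
  have hrepr : ∀ x : E, x = b.repr x 0 • b 0 + b.repr x 1 • b 1 := by
    intro x
    have := b.sum_repr x
    rw [Fin.sum_univ_two] at this
    exact this.symm
  have hdne : d ≠ 0 := by
    intro h0
    apply hω
    ext x y
    have := hexp (b 0) (b 1) x y _ _ _ _ (hrepr x) (hrepr y)
    simp [this, ← hd, h0]
  refine ⟨⟨b 0, d⁻¹ • b 1,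
    LinearMap.toContinuousLinearMap (b.coord 0),
    LinearMap.toContinuousLinearMap (d • (b.coord 1 : E →ₗ[ℝ] ℝ)), ?_, ?_, ?_, ?_, ?_, ?_⟩⟩
  · intro x
    have := hrepr x
    simp only [LinearMap.coe_toContinuousLinearMap', Basis.coord_apply,
      LinearMap.smul_apply, smul_eq_mul]
    rw [smul_smul]
    rw [mul_comm (d * b.repr x 1) d⁻¹, ← mul_assoc, inv_mul_cancel₀ hdne, one_mul]
    exact this
  · intro x y
    have := hexp (b 0) (b 1) x y _ _ _ _ (hrepr x) (hrepr y)
    simp only [LinearMap.coe_toContinuousLinearMap', Basis.coord_apply,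
      LinearMap.smul_apply, smul_eq_mul]
    rw [this, ← hd]
    ring
  · simp [Basis.coord_apply, Basis.repr_self]
  · simp [Basis.coord_apply, Basis.repr_self]
  · simp [Basis.coord_apply, Basis.repr_self, map_smul]
  · simp only [LinearMap.coe_toContinuousLinearMap', LinearMap.smul_apply, Basis.coord_apply,
      map_smul, Basis.repr_self, smul_eq_mul]
    simp
    field_simp


/-- In a normed plane, Birkhoff orthogonality is symmetric iff the norm is a
positive multiple of its antinorm. -/
theorem stmt_11 {E : Type*} [NormedAddCommGroup E] [NormedSpace ℝ E]
    (hdim : Module.finrank ℝ E = 2)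
    (ω : E →ₗ[ℝ] E →ₗ[ℝ] ℝ) (halt : ∀ x : E, ω x x = 0) (hω : ω ≠ 0) :
    (∀ x y : E, BirkhoffOrth x y → BirkhoffOrth y x) ↔
      ∃ lam : ℝ, 0 < lam ∧ ∀ x : E, ‖x‖ = lam * antinorm ω x := by
  have hfd : FiniteDimensional ℝ E := FiniteDimensional.of_finrank_eq_succ hdim
  have hnt : Nontrivial E := Module.nontrivial_of_finrank_pos (R := ℝ) (by omega)
  obtain ⟨P⟩ := pack_exists hdim ω halt hω
  constructor
  · intro hsym
    exact P.hard_direction hsym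
  · rintro ⟨lam, hlam, h⟩
    exact P.easy_direction hlam h
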